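/- Let L be a lattice with a ℤ-action as above and X the quotient graph on L/ℤ. Then X is a weakly modular graph, i.e., it satisfies both the triangle condition and the quadrangle condition at every vertex and every distance n ≥ 2. -/

import Mathlib

open SimpleGraph

/-- The orbit relation of the `ℤ`-action on `L` generated by the order
automorphism `T` (the action of `n` is `T ^ n`, written `x + n` in the paper). -/
def zOrbitRel {L : Type*} [Lattice L] (T : L ≃o L) (x y : L) : Prop :=
  ∃ k : ℤ, (T ^ k) x = y

/-- The graph `X` on the quotient `L/ℤ`, with an edge between two distinct classes `x, y`
whenever some representatives satisfy `x₀ ≤ y₀ ≤ x₀ + 1`. -/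
def quotGraph {L : Type*} [Lattice L] (T : L ≃o L) : SimpleGraph (Quot (zOrbitRel T)) where
  Adj x y := x ≠ y ∧ ∃ x₀ y₀ : L, Quot.mk _ x₀ = x ∧ Quot.mk _ y₀ = y ∧
    x₀ ≤ y₀ ∧ y₀ ≤ T x₀
  symm := by
    constructor
    rintro x y ⟨hne, x₀, y₀, hx, hy, h1, h2⟩
    refine ⟨hne.symm, y₀, T x₀, hy, ?_, h2, T.monotone h1⟩
    rw [← hx]
    exact (Quot.sound ⟨(1 : ℤ), by simp⟩).symm
  loopless := by constructor; rintro x ⟨hne, -⟩; exact hne rfl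

namespace WMAux

variable {L : Type*} [Lattice L] {T : L ≃o L}

lemma zpow_apply_add (T : L ≃o L) (j k : ℤ) (x : L) :
    (T ^ (j + k)) x = (T ^ j) ((T ^ k) x) := by
  rw [zpow_add]; rfl

lemma T_apply_zpow (T : L ≃o L) (k : ℤ) (x : L) : T ((T ^ k) x) = (T ^ (k + 1)) x := by
  rw [add_comm, zpow_apply_add, zpow_one]

lemma zpow_apply_T (T : L ≃o L) (k : ℤ) (x : L) : (T ^ k) (T x) = (T ^ (k + 1)) x := by
  rw [zpow_apply_add T k 1, zpow_one]

lemma zpow_congr (T : L ≃o L) {j k : ℤ} (h : j = k) (x : L) : (T ^ j) x = (T ^ k) x := by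
  rw [h]

variable (hinc : ∀ x : L, x < T x)
  (hcof : ∀ x y : L, ∃ k : ℕ, (T ^ (k : ℤ))⁻¹ x ≤ y ∧ y ≤ (T ^ (k : ℤ)) x)

include hinc in
lemma le_zpow_nat (d : ℕ) (x : L) : x ≤ (T ^ (d : ℤ)) x := by
  induction d generalizing x with
  | zero => simp
  | succ d ih =>
      calc x ≤ T x := (hinc x).le
        _ ≤ (T ^ (d : ℤ)) (T x) := ih (T x)
        _ = (T ^ ((d:ℤ) + 1)) x := zpow_apply_T T _ x
        _ = (T ^ ((d+1 : ℕ) : ℤ)) x := zpow_congr T (by push_cast; ring) x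

include hinc in
lemma zpow_mono {j k : ℤ} (h : j ≤ k) (x : L) : (T ^ j) x ≤ (T ^ k) x := by
  obtain ⟨d, hd⟩ := Int.le.dest h
  calc (T ^ j) x ≤ (T ^ j) ((T ^ (d : ℤ)) x) := (T ^ j).monotone (le_zpow_nat hinc d x)
    _ = (T ^ (j + d)) x := (zpow_apply_add T j d x).symm
    _ = (T ^ k) x := by rw [hd]

include hinc in
lemma zpow_strict {j k : ℤ} (h : j < k) (x : L) : (T ^ j) x < (T ^ k) x := by
  calc (T ^ j) x < (T ^ j) (T x) := (T ^ j).strictMono (hinc x)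
    _ = (T ^ (j + 1)) x := zpow_apply_T T j x
    _ ≤ (T ^ k) x := zpow_mono hinc h x

lemma mk_zpow (T : L ≃o L) (k : ℤ) (x : L) :
    Quot.mk (zOrbitRel T) ((T ^ k) x) = Quot.mk (zOrbitRel T) x :=
  Quot.sound ⟨-k, by rw [← zpow_apply_add]; simp⟩

lemma mk_T (T : L ≃o L) (x : L) :
    Quot.mk (zOrbitRel T) (T x) = Quot.mk (zOrbitRel T) x := by
  have := mk_zpow T 1 x; simpa using this

lemma rel_equiv (T : L ≃o L) : Equivalence (zOrbitRel T) := by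
  constructor
  · exact fun x => ⟨0, by simp⟩
  · rintro x y ⟨k, rfl⟩; exact ⟨-k, by rw [← zpow_apply_add]; simp⟩
  · rintro x y z ⟨k, rfl⟩ ⟨l, rfl⟩; exact ⟨l + k, by rw [zpow_apply_add]⟩

lemma mk_eq_iff (T : L ≃o L) {x y : L} :
    Quot.mk (zOrbitRel T) x = Quot.mk (zOrbitRel T) y ↔ ∃ k : ℤ, (T ^ k) x = y := by
  rw [Quot.eq, Equivalence.eqvGen_iff (rel_equiv T)]; rfl

include hinc hcof in
lemma exists_least (x y : L) :
    ∃ a : ℤ, (y ≤ (T ^ a) x) ∧ ∀ m : ℤ, y ≤ (T ^ m) x → a ≤ m := by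
  obtain ⟨k, -, hk2⟩ := hcof x y
  obtain ⟨k', -, hk2'⟩ := hcof y x
  refine Int.exists_least_of_bdd (P := fun m => y ≤ (T ^ m) x) ⟨-(k' : ℤ), ?_⟩ ⟨k, hk2⟩
  intro m hm
  by_contra h
  push_neg at h
  have h1 : y ≤ (T ^ (m + (k' : ℤ))) y := by
    calc y ≤ (T ^ m) x := hm
      _ ≤ (T ^ m) ((T ^ (k' : ℤ)) y) := (T ^ m).monotone hk2'
      _ = (T ^ (m + (k' : ℤ))) y := (zpow_apply_add T m _ y).symm
  have h2 : (T ^ (m + (k' : ℤ))) y < y := by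
    have := zpow_strict hinc (show m + (k' : ℤ) < 0 by omega) y
    simpa using this
  exact absurd h1 h2.not_ge

noncomputable def aIdx (x y : L) : ℤ := (exists_least hinc hcof x y).choose

lemma aIdx_spec (x y : L) : y ≤ (T ^ aIdx hinc hcof x y) x :=
  (exists_least hinc hcof x y).choose_spec.1

lemma aIdx_min {x y : L} {m : ℤ} (h : y ≤ (T ^ m) x) : aIdx hinc hcof x y ≤ m :=
  (exists_least hinc hcof x y).choose_spec.2 m h

lemma aIdx_shift_right (x y : L) (k : ℤ) :
    aIdx hinc hcof x ((T ^ k) y) = aIdx hinc hcof x y + k := by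
  have h1 : aIdx hinc hcof x ((T ^ k) y) ≤ aIdx hinc hcof x y + k := by
    refine aIdx_min hinc hcof ?_
    calc (T ^ k) y ≤ (T ^ k) ((T ^ aIdx hinc hcof x y) x) := (T ^ k).monotone (aIdx_spec hinc hcof x y)
      _ = (T ^ (aIdx hinc hcof x y + k)) x := by rw [add_comm, zpow_apply_add]
  have h2 : aIdx hinc hcof x y ≤ aIdx hinc hcof x ((T ^ k) y) - k := by
    refine aIdx_min hinc hcof ?_
    have := (T ^ (-k)).monotone (aIdx_spec hinc hcof x ((T ^ k) y))
    calc y = (T ^ (-k)) ((T ^ k) y) := by rw [← zpow_apply_add]; simp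
      _ ≤ (T ^ (-k)) ((T ^ aIdx hinc hcof x ((T ^ k) y)) x) := this
      _ = (T ^ (-k + aIdx hinc hcof x ((T ^ k) y))) x := (zpow_apply_add T _ _ x).symm
      _ = (T ^ (aIdx hinc hcof x ((T ^ k) y) - k)) x := zpow_congr T (by ring) x
  omega

lemma aIdx_shift_left (x y : L) (k : ℤ) :
    aIdx hinc hcof ((T ^ k) x) y = aIdx hinc hcof x y - k := by
  have h1 : aIdx hinc hcof ((T ^ k) x) y ≤ aIdx hinc hcof x y - k := by
    refine aIdx_min hinc hcof ?_
    calc y ≤ (T ^ aIdx hinc hcof x y) x := aIdx_spec hinc hcof x y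
      _ = (T ^ (aIdx hinc hcof x y - k + k)) x := zpow_congr T (by ring) x
      _ = (T ^ (aIdx hinc hcof x y - k)) ((T ^ k) x) := zpow_apply_add T _ _ x
  have h2 : aIdx hinc hcof x y ≤ aIdx hinc hcof ((T ^ k) x) y + k := by
    refine aIdx_min hinc hcof ?_
    calc y ≤ (T ^ aIdx hinc hcof ((T ^ k) x) y) ((T ^ k) x) := aIdx_spec hinc hcof _ y
      _ = (T ^ (aIdx hinc hcof ((T ^ k) x) y + k)) x := by rw [← zpow_apply_add]
  omega

noncomputable def Dv (x y : L) : ℤ := aIdx hinc hcof x y + aIdx hinc hcof y x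

lemma Dv_comm (x y : L) : Dv hinc hcof x y = Dv hinc hcof y x := add_comm _ _

lemma Dv_shift_right (x y : L) (k : ℤ) : Dv hinc hcof x ((T ^ k) y) = Dv hinc hcof x y := by
  unfold Dv
  rw [aIdx_shift_right, aIdx_shift_left]; ring

lemma Dv_shift_left (x y : L) (k : ℤ) : Dv hinc hcof ((T ^ k) x) y = Dv hinc hcof x y := by
  rw [Dv_comm, Dv_shift_right, Dv_comm]

lemma Dv_nonneg (x y : L) : 0 ≤ Dv hinc hcof x y := by
  by_contra h
  push_neg at h
  have h1 : y ≤ (T ^ (Dv hinc hcof x y)) y := by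
    calc y ≤ (T ^ aIdx hinc hcof x y) x := aIdx_spec hinc hcof x y
      _ ≤ (T ^ aIdx hinc hcof x y) ((T ^ aIdx hinc hcof y x) y) :=
          (T ^ _).monotone (aIdx_spec hinc hcof y x)
      _ = (T ^ (Dv hinc hcof x y)) y := (zpow_apply_add T _ _ y).symm
  have h2 : (T ^ (Dv hinc hcof x y)) y < y := by
    have := zpow_strict hinc (show Dv hinc hcof x y < 0 from h) y
    simpa using this
  exact absurd h1 h2.not_ge

lemma mk_eq_of_Dv_le_zero {x y : L} (h : Dv hinc hcof x y ≤ 0) :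
    Quot.mk (zOrbitRel T) x = Quot.mk (zOrbitRel T) y := by
  have h0 : Dv hinc hcof x y = 0 := le_antisymm h (Dv_nonneg hinc hcof x y)
  have h1 : y ≤ (T ^ aIdx hinc hcof x y) x := aIdx_spec hinc hcof x y
  have h2 : (T ^ aIdx hinc hcof x y) x ≤ y := by
    calc (T ^ aIdx hinc hcof x y) x ≤ (T ^ aIdx hinc hcof x y) ((T ^ aIdx hinc hcof y x) y) :=
          (T ^ _).monotone (aIdx_spec hinc hcof y x)
      _ = (T ^ (Dv hinc hcof x y)) y := (zpow_apply_add T _ _ y).symm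
      _ = y := by rw [h0]; simp
  have : (T ^ aIdx hinc hcof x y) x = y := le_antisymm h2 h1
  rw [← this, mk_zpow]

include hinc in
lemma exists_walk_le : ∀ (c : ℕ) (x y : L), y ≤ x → x ≤ (T ^ (c : ℤ)) y →
    ∃ W : (quotGraph T).Walk (Quot.mk (zOrbitRel T) x) (Quot.mk (zOrbitRel T) y),
      W.length ≤ c := by
  intro c
  induction c with
  | zero =>
    intro x y h1 h2
    have : x = y := le_antisymm (by simpa using h2) h1
    subst this
    exact ⟨Walk.nil, by simp⟩
  | succ c ih =>
    intro x y h1 h2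
    set w : L := y ⊔ (T ^ (-1 : ℤ)) x with hw
    have hwx : w ≤ x := by
      refine sup_le h1 ?_
      have := zpow_mono hinc (show (-1 : ℤ) ≤ 0 by omega) x
      simpa using this
    have hxw : x ≤ T w := by
      have : x = T ((T ^ (-1 : ℤ)) x) := by rw [T_apply_zpow]; simp
      rw [this]
      exact T.monotone le_sup_right
    have hyw : y ≤ w := le_sup_left
    have hwc : w ≤ (T ^ (c : ℤ)) y := by
      refine sup_le (le_zpow_nat hinc c y) ?_
      have h3 : (T ^ (-1 : ℤ)) x ≤ (T ^ (-1 : ℤ)) ((T ^ ((c+1 : ℕ) : ℤ)) y) :=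
        (T ^ (-1 : ℤ)).monotone h2
      calc (T ^ (-1 : ℤ)) x ≤ (T ^ (-1 : ℤ)) ((T ^ ((c+1 : ℕ) : ℤ)) y) := h3
        _ = (T ^ ((-1 : ℤ) + ((c+1 : ℕ) : ℤ))) y := (zpow_apply_add T _ _ y).symm
        _ = (T ^ (c : ℤ)) y := zpow_congr T (by push_cast; ring) y
    obtain ⟨W, hW⟩ := ih w y hyw hwc
    by_cases he : Quot.mk (zOrbitRel T) x = Quot.mk (zOrbitRel T) w
    · exact ⟨W.copy he.symm rfl, by simp only [SimpleGraph.Walk.length_copy]; omega⟩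
    · have hadj : (quotGraph T).Adj (Quot.mk (zOrbitRel T) w) (Quot.mk (zOrbitRel T) x) :=
        ⟨Ne.symm he, w, x, rfl, rfl, hwx, hxw⟩
      exact ⟨Walk.cons hadj.symm W, by simpa using hW⟩

include hinc hcof in
lemma reachable_and_dist_le (x y : L) (c : ℕ) (h : Dv hinc hcof x y ≤ (c : ℤ)) :
    (quotGraph T).Reachable (Quot.mk (zOrbitRel T) x) (Quot.mk (zOrbitRel T) y) ∧
      (quotGraph T).dist (Quot.mk (zOrbitRel T) x) (Quot.mk (zOrbitRel T) y) ≤ c := by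
  set a := aIdx hinc hcof x y with ha
  have h1 : (T ^ (-a)) y ≤ x := by
    have := (T ^ (-a)).monotone (aIdx_spec hinc hcof x y)
    calc (T ^ (-a)) y ≤ (T ^ (-a)) ((T ^ a) x) := this
      _ = x := by rw [← zpow_apply_add]; simp
  have h2 : x ≤ (T ^ (c : ℤ)) ((T ^ (-a)) y) := by
    calc x ≤ (T ^ aIdx hinc hcof y x) y := aIdx_spec hinc hcof y x
      _ ≤ (T ^ ((c : ℤ) - a)) y := by
          refine zpow_mono hinc ?_ y
          have := h
          unfold Dv at this
          omega
      _ = (T ^ ((c : ℤ) + -a)) y := zpow_congr T (by ring) y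
      _ = (T ^ (c : ℤ)) ((T ^ (-a)) y) := zpow_apply_add T _ _ y
  obtain ⟨W, hW⟩ := exists_walk_le hinc c x ((T ^ (-a)) y) h1 h2
  have hmk : Quot.mk (zOrbitRel T) ((T ^ (-a)) y) = Quot.mk (zOrbitRel T) y := mk_zpow T _ y
  refine ⟨?_, ?_⟩
  · exact (W.copy rfl hmk).reachable
  · exact le_trans (SimpleGraph.dist_le (W.copy rfl hmk)) (by simpa using hW)

include hinc hcof in
lemma Dv_le_length :
    ∀ {u v : Quot (zOrbitRel T)} (W : (quotGraph T).Walk u v) (x y : L),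
      Quot.mk (zOrbitRel T) x = u → Quot.mk (zOrbitRel T) y = v →
      Dv hinc hcof x y ≤ (W.length : ℤ) := by
  intro u v W
  induction W with
  | nil =>
    intro x y hx hy
    obtain ⟨k, hk⟩ := (mk_eq_iff T).mp (hx.trans hy.symm)
    rw [← hk, Dv_shift_right]
    have h1 : aIdx hinc hcof x x ≤ 0 := aIdx_min hinc hcof (by simp)
    simp only [Walk.length_nil]
    unfold Dv
    omega
  | @cons u u' v h W ih =>
    intro x y hx hy
    obtain ⟨hne, p₀, r₀, hp, hr, h1, h2⟩ := h
    obtain ⟨k, hk⟩ := (mk_eq_iff T).mp (hx.trans hp.symm)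
    have e1 : Dv hinc hcof x y = Dv hinc hcof p₀ y := by
      rw [← hk, Dv_shift_left]
    have e2 : aIdx hinc hcof p₀ y ≤ aIdx hinc hcof r₀ y + 1 := by
      refine aIdx_min hinc hcof ?_
      calc y ≤ (T ^ aIdx hinc hcof r₀ y) r₀ := aIdx_spec hinc hcof r₀ y
        _ ≤ (T ^ aIdx hinc hcof r₀ y) (T p₀) := (T ^ _).monotone h2
        _ = (T ^ (aIdx hinc hcof r₀ y + 1)) p₀ := zpow_apply_T T _ p₀
    have e3 : aIdx hinc hcof y p₀ ≤ aIdx hinc hcof y r₀ := by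
      refine aIdx_min hinc hcof ?_
      exact h1.trans (aIdx_spec hinc hcof y r₀)
    have e4 := ih r₀ y hr hy
    have : Dv hinc hcof p₀ y ≤ Dv hinc hcof r₀ y + 1 := by unfold Dv; omega
    unfold Dv at this e1 e4 ⊢
    rw [e1]
    change _ ≤ ((W.length + 1 : ℕ) : ℤ)
    push_cast
    omega

include hinc hcof in
lemma dist_eq (x y : L) :
    (quotGraph T).dist (Quot.mk (zOrbitRel T) x) (Quot.mk (zOrbitRel T) y) =
      (Dv hinc hcof x y).toNat := by
  have hnn := Dv_nonneg hinc hcof x y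
  by_cases h0 : Dv hinc hcof x y ≤ 0
  · rw [mk_eq_of_Dv_le_zero hinc hcof h0, SimpleGraph.dist_self]
    omega
  · set c := (Dv hinc hcof x y).toNat with hc
    have hcle : Dv hinc hcof x y ≤ (c : ℤ) := by omega
    obtain ⟨hreach, hle⟩ := reachable_and_dist_le hinc hcof x y c hcle
    obtain ⟨W, hW⟩ := hreach.exists_walk_length_eq_dist
    have hge := Dv_le_length hinc hcof W x y rfl rfl
    rw [hW] at hge
    omega

include hinc hcof in
lemma main_lemma (x p q : L) (n : ℕ) (hn : 2 ≤ n)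
    (hpq : p ≤ T q) (hqp : q ≤ T p)
    (hA : aIdx hinc hcof x p = aIdx hinc hcof x q)
    (hdp : (quotGraph T).dist (Quot.mk (zOrbitRel T) x) (Quot.mk (zOrbitRel T) p) = n)
    (hdq : (quotGraph T).dist (Quot.mk (zOrbitRel T) x) (Quot.mk (zOrbitRel T) q) = n) :
    ∃ u, (quotGraph T).dist (Quot.mk (zOrbitRel T) x) u = n - 1 ∧
      (quotGraph T).dist u (Quot.mk (zOrbitRel T) p) = 1 ∧
      (quotGraph T).dist u (Quot.mk (zOrbitRel T) q) = 1 := by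
  set α := aIdx hinc hcof x p with hα
  have hDp : Dv hinc hcof x p = (n : ℤ) := by
    have h := dist_eq hinc hcof x p
    have := Dv_nonneg hinc hcof x p
    omega
  have hDq : Dv hinc hcof x q = (n : ℤ) := by
    have h := dist_eq hinc hcof x q
    have := Dv_nonneg hinc hcof x q
    omega
  have hbp : aIdx hinc hcof p x = (n : ℤ) - α := by unfold Dv at hDp; omega
  have hbq : aIdx hinc hcof q x = (n : ℤ) - α := by
    unfold Dv at hDq; omega
  set u : L := p ⊓ q ⊓ (T ^ (α - 1)) x with hu
  have hup : u ≤ p := le_trans inf_le_left inf_le_left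
  have huq : u ≤ q := le_trans inf_le_left inf_le_right
  have hspec_p : p ≤ (T ^ α) x := aIdx_spec hinc hcof x p
  have hspec_q : q ≤ (T ^ α) x := by rw [hA]; exact aIdx_spec hinc hcof x q
  have hTinf : T u = T p ⊓ T q ⊓ T ((T ^ (α - 1)) x) := by
    rw [hu, OrderIso.map_inf, OrderIso.map_inf]
  have hTlast : T ((T ^ (α - 1)) x) = (T ^ α) x := by
    rw [T_apply_zpow]; exact zpow_congr T (by ring) x
  have hpu : p ≤ T u := by
    rw [hTinf, hTlast]
    exact le_inf (le_inf (hinc p).le hpq) hspec_p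
  have hqu : q ≤ T u := by
    rw [hTinf, hTlast]
    exact le_inf (le_inf hqp (hinc q).le) hspec_q
  have haxu : aIdx hinc hcof x u ≤ α - 1 := aIdx_min hinc hcof inf_le_right
  have haux : aIdx hinc hcof u x ≤ (n : ℤ) - α := by
    refine aIdx_min hinc hcof ?_
    have hinf : (T ^ ((n:ℤ) - α)) u =
        (T ^ ((n:ℤ) - α)) p ⊓ (T ^ ((n:ℤ) - α)) q ⊓ (T ^ ((n:ℤ) - α)) ((T ^ (α - 1)) x) := by
      rw [hu, OrderIso.map_inf, OrderIso.map_inf]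
    rw [hinf]
    refine le_inf (le_inf ?_ ?_) ?_
    · have := aIdx_spec hinc hcof p x; rw [hbp] at this; exact this
    · have := aIdx_spec hinc hcof q x; rw [hbq] at this; exact this
    · have he : (T ^ ((n:ℤ) - α)) ((T ^ (α - 1)) x) = (T ^ ((n:ℤ) - 1)) x := by
        rw [← zpow_apply_add]; ring_nf
      rw [he]
      have := zpow_mono hinc (show (0:ℤ) ≤ (n:ℤ) - 1 by omega) x
      simpa using this
  have hlow1 : α ≤ aIdx hinc hcof x u + 1 := by
    rw [hα]
    refine aIdx_min hinc hcof ?_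
    calc p ≤ T u := hpu
      _ ≤ T ((T ^ aIdx hinc hcof x u) x) := T.monotone (aIdx_spec hinc hcof x u)
      _ = (T ^ (aIdx hinc hcof x u + 1)) x := T_apply_zpow T _ x
  have hlow2 : (n : ℤ) - α ≤ aIdx hinc hcof u x := by
    rw [← hbp]
    refine aIdx_min hinc hcof ?_
    exact (aIdx_spec hinc hcof u x).trans ((T ^ _).monotone hup)
  have hDu : Dv hinc hcof x u = (n : ℤ) - 1 := by unfold Dv; omega
  have hdxu : (quotGraph T).dist (Quot.mk (zOrbitRel T) x) (Quot.mk (zOrbitRel T) u) = n - 1 := by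
    rw [dist_eq hinc hcof, hDu]; omega
  have hnep : Quot.mk (zOrbitRel T) u ≠ Quot.mk (zOrbitRel T) p := by
    intro h; rw [h, hdp] at hdxu; omega
  have hneq : Quot.mk (zOrbitRel T) u ≠ Quot.mk (zOrbitRel T) q := by
    intro h; rw [h, hdq] at hdxu; omega
  refine ⟨Quot.mk (zOrbitRel T) u, hdxu, ?_, ?_⟩
  · exact SimpleGraph.dist_eq_one_iff_adj.mpr ⟨hnep, u, p, rfl, rfl, hup, hpu⟩
  · exact SimpleGraph.dist_eq_one_iff_adj.mpr ⟨hneq, u, q, rfl, rfl, huq, hqu⟩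

end WMAux

open WMAux in
/-- Theorem 2.1. The quotient graph `X = L/ℤ` is weakly modular:
it satisfies the triangle condition and the quadrangle condition at every vertex
and for every distance `n ≥ 2`. -/
theorem quotGraph_weakly_modular {L : Type*} [Lattice L] (T : L ≃o L)
    (hjoin : ∀ S : Set L, S.Nonempty → BddAbove S → ∃ j, IsLUB S j)
    (hinc : ∀ x : L, x < T x)
    (hcof : ∀ x y : L, ∃ k : ℕ, (T ^ (k : ℤ))⁻¹ x ≤ y ∧ y ≤ (T ^ (k : ℤ)) x) :
    (∀ (x : Quot (zOrbitRel T)) (n : ℕ), 2 ≤ n →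
      ∀ y z : Quot (zOrbitRel T), (quotGraph T).Adj y z →
        (quotGraph T).dist x y = n → (quotGraph T).dist x z = n →
        ∃ u, (quotGraph T).dist x u = n - 1 ∧
          (quotGraph T).dist u y = 1 ∧ (quotGraph T).dist u z = 1) ∧
    (∀ (x : Quot (zOrbitRel T)) (n : ℕ), 2 ≤ n →
      ∀ y z t : Quot (zOrbitRel T),
        (quotGraph T).dist x y = n → (quotGraph T).dist x z = n →
        (quotGraph T).Adj y t → (quotGraph T).Adj z t → (quotGraph T).dist x t = n + 1 →
        ∃ u, (quotGraph T).dist x u = n - 1 ∧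
          (quotGraph T).dist u y = 1 ∧ (quotGraph T).dist u z = 1) := by
  constructor
  · -- Triangle condition
    intro x n hn y z hadj hdy hdz
    obtain ⟨x₀, rfl⟩ := Quot.exists_rep x
    obtain ⟨hne, y₀, z₀, rfl, rfl, h1, h2⟩ := hadj
    set α₁ := aIdx hinc hcof x₀ y₀ with hα₁
    set α₂ := aIdx hinc hcof x₀ z₀ with hα₂
    have h12 : α₁ ≤ α₂ := aIdx_min hinc hcof (h1.trans (aIdx_spec hinc hcof x₀ z₀))
    have h21 : α₂ ≤ α₁ + 1 := by
      refine aIdx_min hinc hcof ?_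
      calc z₀ ≤ T y₀ := h2
        _ ≤ T ((T ^ α₁) x₀) := T.monotone (aIdx_spec hinc hcof x₀ y₀)
        _ = (T ^ (α₁ + 1)) x₀ := T_apply_zpow T _ x₀
    rcases eq_or_lt_of_le h12 with heq | hlt
    · -- α₁ = α₂ : use (y₀, z₀)
      exact main_lemma hinc hcof x₀ y₀ z₀ n hn (h1.trans (hinc z₀).le) h2 heq hdy hdz
    · -- α₂ = α₁ + 1 : use (z₀, T y₀)
      have heq2 : aIdx hinc hcof x₀ z₀ = aIdx hinc hcof x₀ (T y₀) := by
        have hs := aIdx_shift_right hinc hcof x₀ y₀ 1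
        have h1' : (T ^ (1:ℤ)) y₀ = T y₀ := by simp
        rw [h1'] at hs
        rw [hs, ← hα₁]
        omega
      have hmkT : Quot.mk (zOrbitRel T) (T y₀) = Quot.mk (zOrbitRel T) y₀ := mk_T T y₀
      have hdy' : (quotGraph T).dist (Quot.mk (zOrbitRel T) x₀)
          (Quot.mk (zOrbitRel T) (T y₀)) = n := by rw [hmkT]; exact hdy
      obtain ⟨u, hu1, hu2, hu3⟩ := main_lemma hinc hcof x₀ z₀ (T y₀) n hn
        (h2.trans (T.monotone (hinc y₀).le)) (T.monotone h1) heq2 hdz hdy'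
      rw [hmkT] at hu3
      exact ⟨u, hu1, hu3, hu2⟩
  · -- Quadrangle condition
    intro x n hn y z t hdy hdz hyt hzt hdt
    obtain ⟨x₀, rfl⟩ := Quot.exists_rep x
    obtain ⟨hne1, y₀, t₀, rfl, ht₀, hyt1, hyt2⟩ := hyt
    obtain ⟨hne2, z₁, t₁, rfl, ht₁, hzt1, hzt2⟩ := hzt
    obtain ⟨k, hk⟩ := (mk_eq_iff T).mp (ht₁.trans ht₀.symm)
    set z₀ : L := (T ^ k) z₁ with hz₀
    have hz1 : z₀ ≤ t₀ := by rw [← hk]; exact (T ^ k).monotone hzt1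
    have hz2 : t₀ ≤ T z₀ := by
      rw [← hk]
      calc (T ^ k) t₁ ≤ (T ^ k) (T z₁) := (T ^ k).monotone hzt2
        _ = (T ^ (k + 1)) z₁ := zpow_apply_T T _ z₁
        _ = T z₀ := by rw [hz₀, T_apply_zpow]
    have hmkz : Quot.mk (zOrbitRel T) z₀ = Quot.mk (zOrbitRel T) z₁ := mk_zpow T k z₁
    have hdz' : (quotGraph T).dist (Quot.mk (zOrbitRel T) x₀)
        (Quot.mk (zOrbitRel T) z₀) = n := by rw [hmkz]; exact hdz
    set α := aIdx hinc hcof x₀ y₀ with hα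
    set β := aIdx hinc hcof x₀ z₀ with hβ
    set τ := aIdx hinc hcof x₀ t₀ with hτ
    -- dist facts
    have hDy : Dv hinc hcof x₀ y₀ = (n : ℤ) := by
      have h := dist_eq hinc hcof x₀ y₀
      have := Dv_nonneg hinc hcof x₀ y₀
      rw [hdy] at h
      omega
    have hDz : Dv hinc hcof x₀ z₀ = (n : ℤ) := by
      have h := dist_eq hinc hcof x₀ z₀
      have := Dv_nonneg hinc hcof x₀ z₀
      rw [hdz'] at h
      omega
    have hDt : Dv hinc hcof x₀ t₀ = (n : ℤ) + 1 := by
      have h := dist_eq hinc hcof x₀ t₀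
      rw [ht₀, hdt] at h
      have := Dv_nonneg hinc hcof x₀ t₀
      omega
    have hby : aIdx hinc hcof y₀ x₀ = (n : ℤ) - α := by unfold Dv at hDy; omega
    have hbz : aIdx hinc hcof z₀ x₀ = (n : ℤ) - β := by unfold Dv at hDz; omega
    -- τ = α + 1
    have hτy : τ ≤ α + 1 := by
      refine aIdx_min hinc hcof ?_
      calc t₀ ≤ T y₀ := hyt2
        _ ≤ T ((T ^ α) x₀) := T.monotone (aIdx_spec hinc hcof x₀ y₀)
        _ = (T ^ (α + 1)) x₀ := T_apply_zpow T _ x₀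
    have hty : aIdx hinc hcof t₀ x₀ ≤ (n : ℤ) - α := by
      rw [← hby]
      refine aIdx_min hinc hcof ?_
      exact (aIdx_spec hinc hcof y₀ x₀).trans ((T ^ _).monotone hyt1)
    have hτα : τ = α + 1 := by unfold Dv at hDt; omega
    have hτz : τ ≤ β + 1 := by
      refine aIdx_min hinc hcof ?_
      calc t₀ ≤ T z₀ := hz2
        _ ≤ T ((T ^ β) x₀) := T.monotone (aIdx_spec hinc hcof x₀ z₀)
        _ = (T ^ (β + 1)) x₀ := T_apply_zpow T _ x₀
    have htz : aIdx hinc hcof t₀ x₀ ≤ (n : ℤ) - β := by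
      rw [← hbz]
      refine aIdx_min hinc hcof ?_
      exact (aIdx_spec hinc hcof z₀ x₀).trans ((T ^ _).monotone hz1)
    have hτβ : τ = β + 1 := by unfold Dv at hDt; omega
    have hαβ : α = β := by omega
    obtain ⟨u, hu1, hu2, hu3⟩ := main_lemma hinc hcof x₀ y₀ z₀ n hn
      (hyt1.trans hz2) (hz1.trans hyt2) hαβ hdy hdz'
    rw [hmkz] at hu3
    exact ⟨u, hu1, hu2, hu3⟩
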